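/- arXiv:1309.0604 — 5 statements merged into one kernel-verified Lean document; each statement's English description precedes it below -/
import Mathlib

section
/- For integer k ≥ 1, real c ≥ 0 and x ≥ 0, the sum Σ_{i=1}^k Γ(i+c, x)/Γ(i) equals (Γ(k+c+1, x) - x^(c+1) Γ(k, x)) / ((c+1) Γ(k)), where Γ(i) = (i-1)! and Γ(·,·) is the upper incomplete Gamma function. -/
open Real MeasureTheory Set Finset

/-- Upper incomplete Gamma function `Γ(s, x) = ∫_x^∞ z^(s-1) e^(-z) dz`. -/
noncomputable def uGamma (s x : ℝ) : ℝ := ∫ z in Set.Ioi x, z ^ (s - 1) * Real.exp (-z)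

lemma uGamma_integrable {s x : ℝ} (hs : 0 < s) (hx : 0 ≤ x) :
    IntegrableOn (fun z : ℝ => z ^ (s - 1) * Real.exp (-z)) (Set.Ioi x) := by
  have := (Real.GammaIntegral_convergent hs).mono_set (Set.Ioi_subset_Ioi hx)
  simpa [mul_comm] using this.congr_fun (fun z _ => by ring) measurableSet_Ioi

lemma uGamma_rec {s : ℝ} (hs : 0 < s) {x : ℝ} (hx : 0 ≤ x) :
    uGamma (s + 1) x = s * uGamma s x + x ^ s * Real.exp (-x) := by
  have I1 : IntegrableOn (fun z : ℝ => z ^ s * Real.exp (-z)) (Set.Ioi x) := by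
    simpa using uGamma_integrable (by linarith : (0:ℝ) < s + 1) hx
  have I2 := uGamma_integrable hs hx
  set f : ℝ → ℝ := fun z => -(z ^ s * Real.exp (-z)) with hf
  set f' : ℝ → ℝ := fun z => z ^ s * Real.exp (-z) - s * (z ^ (s - 1) * Real.exp (-z)) with hf'
  have hderiv : ∀ z ∈ Set.Ioi x, HasDerivAt f (f' z) z := by
    intro z hz
    have hz0 : (0:ℝ) < z := lt_of_le_of_lt hx hz
    have h1 : HasDerivAt (fun z : ℝ => z ^ s) (s * z ^ (s - 1)) z :=
      Real.hasDerivAt_rpow_const (Or.inl hz0.ne')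
    have h2 : HasDerivAt (fun z : ℝ => Real.exp (-z)) (-Real.exp (-z)) z := by
      simpa [Function.comp_def] using (Real.hasDerivAt_exp (-z)).comp z (hasDerivAt_neg z)
    have := (h1.mul h2).neg
    refine this.congr_deriv ?_
    simp only [hf']
    ring
  have hcont : ContinuousWithinAt f (Set.Ici x) x := by
    apply ContinuousAt.continuousWithinAt
    exact ((Real.continuousAt_rpow_const _ _ (Or.inr hs.le)).mul
      (Real.continuous_exp.continuousAt.comp (continuous_neg.continuousAt))).neg
  have htend : Filter.Tendsto f Filter.atTop (nhds 0) := by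
    have := (tendsto_rpow_mul_exp_neg_mul_atTop_nhds_zero s 1 one_pos).neg
    simpa using this
  have hint : IntegrableOn f' (Set.Ioi x) := I1.sub (I2.const_mul s)
  have key := integral_Ioi_of_hasDerivAt_of_tendsto hcont hderiv hint htend
  have hsplit : ∫ z in Set.Ioi x, f' z
      = (∫ z in Set.Ioi x, z ^ s * Real.exp (-z))
        - s * ∫ z in Set.Ioi x, z ^ (s - 1) * Real.exp (-z) := by
    rw [MeasureTheory.integral_sub I1 (I2.const_mul s), MeasureTheory.integral_const_mul]
  rw [hsplit] at key
  have : uGamma (s + 1) x = ∫ z in Set.Ioi x, z ^ s * Real.exp (-z) := by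
    simp [uGamma]
  rw [this, uGamma]
  simp only [hf] at key
  linarith [key]

lemma uGamma_one (x : ℝ) : uGamma 1 x = Real.exp (-x) := by
  simp [uGamma, integral_exp_neg_Ioi, integral_exp_Iic]

theorem stmt2 (k : ℕ) (hk : 1 ≤ k) (c x : ℝ) (hc : 0 ≤ c) (hx : 0 ≤ x) :
    ∑ i ∈ Finset.Icc 1 k, uGamma ((i : ℝ) + c) x / (Nat.factorial (i - 1) : ℝ)
      = (uGamma ((k : ℝ) + c + 1) x - x ^ (c + 1) * uGamma k x)
          / ((c + 1) * (Nat.factorial (k - 1) : ℝ)) := by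
  induction k, hk using Nat.le_induction with
  | base =>
    have h1 := uGamma_rec (by linarith : (0:ℝ) < c + 1) hx
    rw [Finset.Icc_self, Finset.sum_singleton]
    push_cast
    rw [show (1:ℝ) + c + 1 = (c + 1) + 1 by ring, h1, uGamma_one,
      show (1:ℝ) + c = c + 1 by ring]
    have hc1 : c + 1 ≠ 0 := by positivity
    field_simp
    ring
  | succ k hk ih =>
    have hk0 : (0:ℝ) < k := by exact_mod_cast hk
    have hA := uGamma_rec (by linarith : (0:ℝ) < (k:ℝ) + c + 1) hx
    have hB := uGamma_rec hk0 hx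
    rw [Finset.sum_Icc_succ_top (by omega : 1 ≤ k + 1), ih]
    have hfac : ((k.factorial : ℝ)) = k * ((k - 1).factorial : ℝ) := by
      rw [← Nat.mul_factorial_pred (by omega : k ≠ 0)]
      push_cast
      ring
    have hpq : x ^ ((k:ℝ) + c + 1) = x ^ (c + 1) * x ^ (k:ℝ) := by
      rw [show (k:ℝ) + c + 1 = (c + 1) + k by ring,
        Real.rpow_add' hx (by positivity)]
    push_cast
    rw [show (k:ℝ) + 1 + c + 1 = ((k:ℝ) + c + 1) + 1 by ring, hA,
      show (k:ℝ) + 1 = (k:ℝ) + 1 from rfl]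
    rw [show uGamma ((k:ℝ) + 1) x = (k:ℝ) * uGamma (k:ℝ) x + x ^ (k:ℝ) * Real.exp (-x) from hB]
    rw [show (k:ℝ) + 1 + c = (k:ℝ) + c + 1 by ring]
    rw [hfac, hpq]
    have hc1 : c + 1 ≠ 0 := by positivity
    have hf0 : ((k - 1).factorial : ℝ) ≠ 0 := by positivity
    field_simp
    ring
end

section
/- Let I^c_1 = 1 and I^c_i = I^c_{i-1} + G_i where G_i are independent geometric random variables on {1,2,...} with parameters g_i = q^(i-1-k), and let I^p_1 = 1 and I^p_i = I^p_{i-1} + G̃_i where G̃_i are independent geometric with parameters g̃_i = (i-1)/k. Then for q ≥ 2 the random vector (I^c_1,...,I^c_k) is less than (I^p_1,...,I^p_k) in the usual multivariate stochastic order; i.e., E[F(I^c)] ≤ E[F(I^p)] for every bounded coordinatewise-increasing F : ℝ^k → ℝ. -/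
open Finset

/-- Index of the `(i+1)`-st contacted cache, given increments `w j + 1` (so each increment is
a positive integer): `I_1 = 1` and `I_i = I_{i-1} + (w_{i-1} + 1)`. -/
noncomputable def cacheIndex (k : ℕ) (w : Fin (k - 1) → ℕ) (i : Fin k) : ℝ :=
  1 + ∑ j ∈ Finset.univ.filter (fun j : Fin (k - 1) => (j : ℕ) < (i : ℕ)), ((w j : ℝ) + 1)


lemma geom_rep {a : ℝ} (h0 : 0 ≤ a) (h1 : a < 1) (h : ℕ → ℝ) (C : ℝ) (hC : ∀ n, |h n| ≤ C) :
    ∑' n : ℕ, (1 - a) * a ^ n * h n = h 0 + ∑' n : ℕ, a ^ (n + 1) * (h (n + 1) - h n) := by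
  have s1 : Summable (fun n : ℕ => a ^ n * h n) := by
    apply Summable.of_norm_bounded (g := fun n => a ^ n * C)
    · exact (summable_geometric_of_lt_one h0 h1).mul_right _
    · intro n
      rw [norm_mul, norm_pow, Real.norm_eq_abs, Real.norm_eq_abs, abs_of_nonneg h0]
      exact mul_le_mul_of_nonneg_left (hC n) (pow_nonneg h0 n)
  have s2 : Summable (fun n : ℕ => a ^ (n + 1) * h n) := by
    apply Summable.of_norm_bounded (g := fun n => a ^ n * C)
    · exact (summable_geometric_of_lt_one h0 h1).mul_right _
    · intro n
      rw [norm_mul, norm_pow, Real.norm_eq_abs, Real.norm_eq_abs, abs_of_nonneg h0]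
      calc a ^ (n+1) * |h n| ≤ a ^ n * |h n| := by
              apply mul_le_mul_of_nonneg_right _ (abs_nonneg _)
              exact pow_le_pow_of_le_one h0 h1.le (Nat.le_succ n)
        _ ≤ a ^ n * C := mul_le_mul_of_nonneg_left (hC n) (pow_nonneg h0 n)
  have s3 : Summable (fun n : ℕ => a ^ (n + 1) * h (n + 1)) := by
    have := (summable_nat_add_iff 1).2 s1
    simpa using this
  have key : (fun n : ℕ => (1 - a) * a ^ n * h n) =
      fun n : ℕ => a ^ n * h n - a ^ (n + 1) * h n := by
    funext n; ring
  rw [key, Summable.tsum_sub s1 s2]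
  have shift : ∑' n : ℕ, a ^ n * h n = h 0 + ∑' n : ℕ, a ^ (n + 1) * h (n + 1) := by
    simpa using Summable.tsum_eq_zero_add s1
  have split : ∑' n : ℕ, a ^ (n + 1) * (h (n + 1) - h n)
      = (∑' n : ℕ, a ^ (n + 1) * h (n + 1)) - ∑' n : ℕ, a ^ (n + 1) * h n := by
    rw [← Summable.tsum_sub s3 s2]; congr 1; funext n; ring
  rw [shift, split]; ring

lemma geom_mono {a b : ℝ} (h0 : 0 ≤ a) (hab : a ≤ b) (h1 : b < 1)
    (h : ℕ → ℝ) (C : ℝ) (hC : ∀ n, |h n| ≤ C) (hmono : Monotone h) :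
    ∑' n : ℕ, (1 - a) * a ^ n * h n ≤ ∑' n : ℕ, (1 - b) * b ^ n * h n := by
  have hb0 : 0 ≤ b := le_trans h0 hab
  have ha1 : a < 1 := lt_of_le_of_lt hab h1
  rw [geom_rep h0 ha1 h C hC, geom_rep hb0 h1 h C hC]
  refine add_le_add_right (Summable.tsum_le_tsum ?_ ?_ ?_) _
  · intro n
    refine mul_le_mul_of_nonneg_right (pow_le_pow_left₀ h0 hab _) ?_
    simp [hmono (Nat.le_succ n)]
  · apply Summable.of_norm_bounded (g := fun n => a ^ (n+1) * (2*C))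
    · exact ((summable_nat_add_iff 1).2 (summable_geometric_of_lt_one h0 ha1)).mul_right _
    · intro n
      rw [norm_mul, norm_pow, Real.norm_eq_abs, Real.norm_eq_abs, abs_of_nonneg h0]
      refine mul_le_mul_of_nonneg_left ?_ (pow_nonneg h0 _)
      calc |h (n+1) - h n| ≤ |h (n+1)| + |h n| := abs_sub _ _
        _ ≤ C + C := add_le_add (hC _) (hC _)
        _ = 2 * C := by ring
  · apply Summable.of_norm_bounded (g := fun n => b ^ (n+1) * (2*C))
    · exact ((summable_nat_add_iff 1).2 (summable_geometric_of_lt_one hb0 h1)).mul_right _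
    · intro n
      rw [norm_mul, norm_pow, Real.norm_eq_abs, Real.norm_eq_abs, abs_of_nonneg hb0]
      refine mul_le_mul_of_nonneg_left ?_ (pow_nonneg hb0 _)
      calc |h (n+1) - h n| ≤ |h (n+1)| + |h n| := abs_sub _ _
        _ ≤ C + C := add_le_add (hC _) (hC _)
        _ = 2 * C := by ring

section helper
variable {m : ℕ}

lemma wt_nonneg (g : Fin m → ℝ) (hg0 : ∀ j, 0 ≤ g j) (hg1 : ∀ j, g j < 1) (w : Fin m → ℕ) :
    0 ≤ ∏ j, (1 - g j) * g j ^ (w j) := by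
  apply Finset.prod_nonneg
  intro j _
  exact mul_nonneg (by linarith [hg1 j]) (pow_nonneg (hg0 j) _)

lemma wt_cons (c : Fin (m + 1) → ℝ) (n : ℕ) (w : Fin m → ℕ) :
    ∏ j : Fin (m + 1), (1 - c j) * c j ^ ((Fin.cons n w : Fin (m+1) → ℕ) j) =
      ((1 - c 0) * c 0 ^ n) * ∏ j : Fin m, (1 - c j.succ) * c j.succ ^ (w j) := by
  rw [Fin.prod_univ_succ]
  simp

lemma wt_summable : ∀ (m : ℕ) (g : Fin m → ℝ), (∀ j, 0 ≤ g j) → (∀ j, g j < 1) →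
    Summable (fun w : Fin m → ℕ => ∏ j, (1 - g j) * g j ^ (w j)) ∧
      (∑' w : Fin m → ℕ, ∏ j, (1 - g j) * g j ^ (w j)) = 1 := by
  intro m
  induction m with
  | zero =>
    intro g hg0 hg1
    constructor
    · exact Summable.of_finite
    · rw [tsum_eq_single (default : Fin 0 → ℕ) (by intro b hb; exact absurd (Subsingleton.elim b default) hb)]
      simp
  | succ m IH =>
    intro g hg0 hg1
    obtain ⟨St, Tt⟩ := IH (fun j => g j.succ) (fun j => hg0 _) (fun j => hg1 _)
    have ha0 : 0 ≤ g 0 := hg0 0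
    have ha1 : g 0 < 1 := hg1 0
    have Sf : Summable (fun n : ℕ => (1 - g 0) * g 0 ^ n) :=
      (summable_geometric_of_lt_one ha0 ha1).mul_left _
    have Tf : ∑' n : ℕ, (1 - g 0) * g 0 ^ n = 1 := by
      rw [tsum_mul_left, tsum_geometric_of_lt_one ha0 ha1]
      rw [mul_inv_cancel₀ (by linarith : (1:ℝ) - g 0 ≠ 0)]
    have Spair : Summable (fun p : ℕ × (Fin m → ℕ) =>
        ((1 - g 0) * g 0 ^ p.1) * ∏ j : Fin m, (1 - g j.succ) * g j.succ ^ (p.2 j)) := by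
      apply Summable.mul_of_nonneg Sf St
      · intro n
        exact mul_nonneg (by linarith) (pow_nonneg ha0 _)
      · intro w
        exact wt_nonneg _ (fun j => hg0 _) (fun j => hg1 _) w
    have e := Fin.consEquiv (fun _ : Fin (m + 1) => ℕ)
    have heq : ∀ p : ℕ × (Fin m → ℕ),
        (∏ j : Fin (m+1), (1 - g j) * g j ^ ((Fin.consEquiv (fun _ : Fin (m+1) => ℕ)) p j)) =
        ((1 - g 0) * g 0 ^ p.1) * ∏ j : Fin m, (1 - g j.succ) * g j.succ ^ (p.2 j) := by
      intro p
      exact wt_cons g p.1 p.2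
    constructor
    · rw [← (Equiv.summable_iff (Fin.consEquiv (fun _ : Fin (m+1) => ℕ)))]
      exact Summable.congr Spair (fun p => (heq p).symm)
    · rw [← Equiv.tsum_eq (Fin.consEquiv (fun _ : Fin (m+1) => ℕ))]
      calc (∑' p : ℕ × (Fin m → ℕ), ∏ j : Fin (m+1),
              (1 - g j) * g j ^ ((Fin.consEquiv (fun _ : Fin (m+1) => ℕ)) p j))
          = ∑' p : ℕ × (Fin m → ℕ), ((1 - g 0) * g 0 ^ p.1) *
              ∏ j : Fin m, (1 - g j.succ) * g j.succ ^ (p.2 j) := tsum_congr heq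
        _ = ∑' n : ℕ, ∑' w : Fin m → ℕ, ((1 - g 0) * g 0 ^ n) *
              ∏ j : Fin m, (1 - g j.succ) * g j.succ ^ (w j) := Summable.tsum_prod' Spair Spair.prod_factor
        _ = ∑' n : ℕ, ((1 - g 0) * g 0 ^ n) * ∑' w : Fin m → ℕ,
              ∏ j : Fin m, (1 - g j.succ) * g j.succ ^ (w j) := by
              congr 1; funext n; rw [tsum_mul_left]
        _ = 1 := by
              rw [Tt]
              simpa using Tf

end helper

section multi
variable {m : ℕ} {H : (Fin (m + 1) → ℕ) → ℝ} {C : ℝ}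

lemma cons_le {n n' : ℕ} {v w : Fin m → ℕ} (hn : n ≤ n') (hvw : ∀ j, v j ≤ w j) :
    ∀ j : Fin (m + 1), (Fin.cons n v : Fin (m+1) → ℕ) j ≤ (Fin.cons n' w : Fin (m+1) → ℕ) j := by
  intro j
  refine Fin.cases ?_ ?_ j
  · simpa using hn
  · intro i; simpa using hvw i

lemma Ssec (hC : ∀ w, |H w| ≤ C) (c : Fin m → ℝ) (hc0 : ∀ j, 0 ≤ c j) (hc1 : ∀ j, c j < 1)
    (hS : Summable (fun w : Fin m → ℕ => ∏ j, (1 - c j) * c j ^ (w j))) (n : ℕ) :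
    Summable (fun w : Fin m → ℕ =>
      (∏ j, (1 - c j) * c j ^ (w j)) * H (Fin.cons n w : Fin (m+1) → ℕ)) := by
  refine Summable.of_norm_bounded (hS.mul_right C) fun w => ?_
  rw [Real.norm_eq_abs, abs_mul, abs_of_nonneg (wt_nonneg c hc0 hc1 w)]
  exact mul_le_mul_of_nonneg_left (hC _) (wt_nonneg c hc0 hc1 w)

lemma Tbdd (hC : ∀ w, |H w| ≤ C) (c : Fin m → ℝ) (hc0 : ∀ j, 0 ≤ c j) (hc1 : ∀ j, c j < 1)
    (n : ℕ) :
    |∑' w : Fin m → ℕ, (∏ j, (1 - c j) * c j ^ (w j)) * H (Fin.cons n w : Fin (m+1) → ℕ)| ≤ C := by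
  obtain ⟨hS, hTsum⟩ := wt_summable m c hc0 hc1
  have hnn := fun w => wt_nonneg c hc0 hc1 w
  rw [abs_le]
  constructor
  · have : (-C) = ∑' w : Fin m → ℕ, (∏ j, (1 - c j) * c j ^ (w j)) * (-C) := by
      rw [tsum_mul_right, hTsum, one_mul]
    rw [this]
    apply Summable.tsum_le_tsum _ (hS.mul_right _) (Ssec hC c hc0 hc1 hS n)
    intro w
    exact mul_le_mul_of_nonneg_left (neg_le_of_abs_le (hC _)) (hnn w)
  · have : C = ∑' w : Fin m → ℕ, (∏ j, (1 - c j) * c j ^ (w j)) * C := by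
      rw [tsum_mul_right, hTsum, one_mul]
    rw [this]
    apply Summable.tsum_le_tsum _ (Ssec hC c hc0 hc1 hS n) (hS.mul_right _)
    intro w
    exact mul_le_mul_of_nonneg_left (le_of_abs_le (hC _)) (hnn w)

lemma decomp (hC : ∀ w, |H w| ≤ C) (c : Fin (m + 1) → ℝ)
    (hc0 : ∀ j, 0 ≤ c j) (hc1 : ∀ j, c j < 1) :
    (∑' w : Fin (m + 1) → ℕ, (∏ j, (1 - c j) * c j ^ (w j)) * H w)
      = ∑' n : ℕ, ((1 - c 0) * c 0 ^ n) *
          ∑' w : Fin m → ℕ, (∏ j, (1 - c j.succ) * c j.succ ^ (w j)) *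
            H (Fin.cons n w : Fin (m+1) → ℕ) := by
  obtain ⟨Sc, Tc⟩ := wt_summable m (fun j => c j.succ) (fun j => hc0 _) (fun j => hc1 _)
  have Sf : Summable (fun n : ℕ => (1 - c 0) * c 0 ^ n) :=
    (summable_geometric_of_lt_one (hc0 0) (hc1 0)).mul_left _
  have Spair : Summable (fun p : ℕ × (Fin m → ℕ) =>
      (((1 - c 0) * c 0 ^ p.1) * ∏ j : Fin m, (1 - c j.succ) * c j.succ ^ (p.2 j))
        * H (Fin.cons p.1 p.2 : Fin (m+1) → ℕ)) := by
    have base : Summable (fun p : ℕ × (Fin m → ℕ) =>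
        ((1 - c 0) * c 0 ^ p.1) * ∏ j : Fin m, (1 - c j.succ) * c j.succ ^ (p.2 j)) := by
      apply Summable.mul_of_nonneg Sf Sc
      · intro n; exact mul_nonneg (by linarith [hc1 0]) (pow_nonneg (hc0 0) _)
      · intro w; exact wt_nonneg _ (fun j => hc0 _) (fun j => hc1 _) w
    refine Summable.of_norm_bounded (base.mul_right C) fun p => ?_
    have hnn : 0 ≤ ((1 - c 0) * c 0 ^ p.1) * ∏ j : Fin m, (1 - c j.succ) * c j.succ ^ (p.2 j) :=
      mul_nonneg (mul_nonneg (by linarith [hc1 0]) (pow_nonneg (hc0 0) _))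
        (wt_nonneg _ (fun j => hc0 _) (fun j => hc1 _) p.2)
    rw [Real.norm_eq_abs, abs_mul, abs_of_nonneg hnn]
    exact mul_le_mul_of_nonneg_left (hC _) hnn
  rw [← Equiv.tsum_eq (Fin.consEquiv (fun _ : Fin (m+1) => ℕ))]
  have heq : ∀ p : ℕ × (Fin m → ℕ),
      (∏ j : Fin (m+1), (1 - c j) * c j ^ ((Fin.consEquiv (fun _ : Fin (m+1) => ℕ)) p j))
        * H ((Fin.consEquiv (fun _ : Fin (m+1) => ℕ)) p)
      = (((1 - c 0) * c 0 ^ p.1) * ∏ j : Fin m, (1 - c j.succ) * c j.succ ^ (p.2 j))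
        * H (Fin.cons p.1 p.2 : Fin (m+1) → ℕ) := by
    intro p
    have h1 : (Fin.consEquiv (fun _ : Fin (m+1) => ℕ)) p = (Fin.cons p.1 p.2 : Fin (m+1) → ℕ) := rfl
    rw [h1, wt_cons c p.1 p.2]
  calc (∑' p : ℕ × (Fin m → ℕ),
          (∏ j : Fin (m+1), (1 - c j) * c j ^ ((Fin.consEquiv (fun _ : Fin (m+1) => ℕ)) p j))
            * H ((Fin.consEquiv (fun _ : Fin (m+1) => ℕ)) p))
      = ∑' p : ℕ × (Fin m → ℕ),
          (((1 - c 0) * c 0 ^ p.1) * ∏ j : Fin m, (1 - c j.succ) * c j.succ ^ (p.2 j))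
            * H (Fin.cons p.1 p.2 : Fin (m+1) → ℕ) := tsum_congr heq
    _ = ∑' n : ℕ, ∑' w : Fin m → ℕ,
          (((1 - c 0) * c 0 ^ n) * ∏ j : Fin m, (1 - c j.succ) * c j.succ ^ (w j))
            * H (Fin.cons n w : Fin (m+1) → ℕ) := Summable.tsum_prod' Spair Spair.prod_factor
    _ = ∑' n : ℕ, ((1 - c 0) * c 0 ^ n) *
          ∑' w : Fin m → ℕ, (∏ j, (1 - c j.succ) * c j.succ ^ (w j)) *
            H (Fin.cons n w : Fin (m+1) → ℕ) := by
          apply tsum_congr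
          intro n
          rw [← tsum_mul_left]
          apply tsum_congr
          intro w
          ring

end multi

lemma multi : ∀ (m : ℕ) (g g' : Fin m → ℝ), (∀ j, 0 ≤ g j) → (∀ j, g j ≤ g' j) →
    (∀ j, g' j < 1) → ∀ (H : (Fin m → ℕ) → ℝ) (C : ℝ), (∀ w, |H w| ≤ C) →
    (∀ v w : Fin m → ℕ, (∀ j, v j ≤ w j) → H v ≤ H w) →
    (∑' w : Fin m → ℕ, (∏ j, (1 - g j) * g j ^ (w j)) * H w)
      ≤ ∑' w : Fin m → ℕ, (∏ j, (1 - g' j) * g' j ^ (w j)) * H w := by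
  intro m
  induction m with
  | zero =>
    intro g g' _ _ _ H C _ _
    simp
  | succ m IH =>
    intro g g' hg0 hgg hg1 H C hC hmono
    have hg1' : ∀ j, g j < 1 := fun j => lt_of_le_of_lt (hgg j) (hg1 j)
    have hg'0 : ∀ j, 0 ≤ g' j := fun j => le_trans (hg0 j) (hgg j)
    obtain ⟨St, Tt⟩ := wt_summable m (fun j => g j.succ) (fun j => hg0 _) (fun j => hg1' _)
    obtain ⟨St', Tt'⟩ := wt_summable m (fun j => g' j.succ) (fun j => hg'0 _) (fun j => hg1 _)
    rw [decomp hC g hg0 hg1', decomp hC g' hg'0 hg1]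
    have Tgbdd := fun n => Tbdd hC (fun j => g j.succ) (fun j => hg0 _) (fun j => hg1' _) n
    have Tg'bdd := fun n => Tbdd hC (fun j => g' j.succ) (fun j => hg'0 _) (fun j => hg1 _) n
    have Tgmono : Monotone (fun n => ∑' w : Fin m → ℕ,
        (∏ j, (1 - g j.succ) * g j.succ ^ (w j)) * H (Fin.cons n w : Fin (m+1) → ℕ)) := by
      intro n n' hn
      apply Summable.tsum_le_tsum _ (Ssec hC (fun j => g j.succ) (fun j => hg0 _) (fun j => hg1' _) St n)
        (Ssec hC (fun j => g j.succ) (fun j => hg0 _) (fun j => hg1' _) St n')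
      intro w
      apply mul_le_mul_of_nonneg_left _
        (wt_nonneg (fun j => g j.succ) (fun j => hg0 _) (fun j => hg1' _) w)
      exact hmono _ _ (cons_le hn (fun j => le_rfl))
    calc (∑' n : ℕ, ((1 - g 0) * g 0 ^ n) * ∑' w : Fin m → ℕ,
            (∏ j, (1 - g j.succ) * g j.succ ^ (w j)) * H (Fin.cons n w : Fin (m+1) → ℕ))
        ≤ ∑' n : ℕ, ((1 - g' 0) * g' 0 ^ n) * ∑' w : Fin m → ℕ,
            (∏ j, (1 - g j.succ) * g j.succ ^ (w j)) * H (Fin.cons n w : Fin (m+1) → ℕ) := by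
          have := geom_mono (hg0 0) (hgg 0) (hg1 0) _ C Tgbdd Tgmono
          simpa [mul_assoc] using this
      _ ≤ ∑' n : ℕ, ((1 - g' 0) * g' 0 ^ n) * ∑' w : Fin m → ℕ,
            (∏ j, (1 - g' j.succ) * g' j.succ ^ (w j)) * H (Fin.cons n w : Fin (m+1) → ℕ) := by
          have hnn : ∀ n : ℕ, 0 ≤ (1 - g' 0) * g' 0 ^ n := fun n =>
            mul_nonneg (by linarith [hg1 0]) (pow_nonneg (hg'0 0) _)
          apply Summable.tsum_le_tsum
          · intro n
            apply mul_le_mul_of_nonneg_left _ (hnn n)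
            exact IH (fun j => g j.succ) (fun j => g' j.succ) (fun j => hg0 _) (fun j => hgg _)
              (fun j => hg1 _) (fun w => H (Fin.cons n w : Fin (m+1) → ℕ)) C (fun w => hC _)
              (fun v w hvw => hmono _ _ (cons_le le_rfl hvw))
          · refine Summable.of_norm_bounded (g := fun n => ((1 - g' 0) * g' 0 ^ n) * C)
              (((summable_geometric_of_lt_one (hg'0 0) (hg1 0)).mul_left _).mul_right _)
              fun n => ?_
            rw [Real.norm_eq_abs, abs_mul, abs_of_nonneg (hnn n)]
            exact mul_le_mul_of_nonneg_left (Tgbdd n) (hnn n)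
          · refine Summable.of_norm_bounded (g := fun n => ((1 - g' 0) * g' 0 ^ n) * C)
              (((summable_geometric_of_lt_one (hg'0 0) (hg1 0)).mul_left _).mul_right _)
              fun n => ?_
            rw [Real.norm_eq_abs, abs_mul, abs_of_nonneg (hnn n)]
            exact mul_le_mul_of_nonneg_left (Tg'bdd n) (hnn n)


/-- `I^c ≤_st I^p`: for independent geometric increments with parameters
`g_i = q^(i-1)/q^k` (coded) and `g̃_i = (i-1)/k` (uncoded), the expectation of every
bounded coordinatewise-increasing `F` of the coded index vector is at most that of the
uncoded index vector. Expectations are written as sums over the increment vector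
`w : Fin (k-1) → ℕ`, where increment `i = j + 2` takes value `w j + 1` with probability
`(1 - g_i) g_i^(w j)`. -/
theorem stmt12 (q k : ℕ) (hq : 2 ≤ q) (hk : 1 ≤ k)
    (F : (Fin k → ℝ) → ℝ)
    (hFbdd : ∃ C : ℝ, ∀ v, |F v| ≤ C)
    (hFmono : ∀ v w : Fin k → ℝ, (∀ i, v i ≤ w i) → F v ≤ F w) :
    (∑' w : Fin (k - 1) → ℕ,
        (∏ j : Fin (k - 1), (1 - (q : ℝ) ^ ((j : ℕ) + 1) / (q : ℝ) ^ k)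
            * ((q : ℝ) ^ ((j : ℕ) + 1) / (q : ℝ) ^ k) ^ (w j)) * F (cacheIndex k w))
      ≤ ∑' w : Fin (k - 1) → ℕ,
        (∏ j : Fin (k - 1), (1 - (((j : ℕ) : ℝ) + 1) / (k : ℝ))
            * ((((j : ℕ) : ℝ) + 1) / (k : ℝ)) ^ (w j)) * F (cacheIndex k w) := by
  obtain ⟨C, hC⟩ := hFbdd
  have hq0 : (0 : ℝ) < q := by positivity
  have hk0 : (0 : ℝ) < k := by exact_mod_cast hk
  have key : ∀ j : Fin (k - 1),
      (q : ℝ) ^ ((j : ℕ) + 1) / (q : ℝ) ^ k ≤ (((j : ℕ) : ℝ) + 1) / (k : ℝ) := by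
    intro j
    have hj : (j : ℕ) + 1 < k := by
      have := j.isLt
      omega
    set i : ℕ := (j : ℕ) + 1 with hi
    have hik : i < k := hj
    have hnat : k * q ^ i ≤ i * q ^ k := by
      have h1 : k - i + 1 ≤ 2 ^ (k - i) := Nat.lt_two_pow_self
      have h2 : (2 : ℕ) ^ (k - i) ≤ q ^ (k - i) := Nat.pow_le_pow_left hq _
      have h3 : k ≤ i * q ^ (k - i) := by
        calc k = (k - i) + i := by omega
          _ ≤ i * (k - i) + i := by
              have : 1 ≤ i := by omega
              nlinarith
          _ = i * ((k - i) + 1) := by ring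
          _ ≤ i * 2 ^ (k - i) := Nat.mul_le_mul_left _ h1
          _ ≤ i * q ^ (k - i) := Nat.mul_le_mul_left _ h2
      calc k * q ^ i ≤ (i * q ^ (k - i)) * q ^ i := Nat.mul_le_mul_right _ h3
        _ = i * q ^ k := by
            rw [mul_assoc, ← pow_add]
            congr 2
            omega
    rw [div_le_div_iff₀ (by positivity) hk0]
    calc (q : ℝ) ^ i * k = ((k * q ^ i : ℕ) : ℝ) := by push_cast; ring
      _ ≤ ((i * q ^ k : ℕ) : ℝ) := by exact_mod_cast hnat
      _ = (((j : ℕ) : ℝ) + 1) * (q : ℝ) ^ k := by rw [hi]; push_cast; ring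
  have hlt1 : ∀ j : Fin (k - 1), (((j : ℕ) : ℝ) + 1) / (k : ℝ) < 1 := by
    intro j
    rw [div_lt_one hk0]
    have := j.isLt
    have : (j : ℕ) + 1 < k := by omega
    exact_mod_cast this
  exact multi (k - 1) (fun j => (q : ℝ) ^ ((j : ℕ) + 1) / (q : ℝ) ^ k)
    (fun j => (((j : ℕ) : ℝ) + 1) / (k : ℝ))
    (fun j => by positivity) key hlt1
    (fun w => F (cacheIndex k w)) C (fun w => hC _)
    (fun v w hvw => hFmono _ _ (fun i => by
      unfold cacheIndex
      apply add_le_add_right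
      apply Finset.sum_le_sum
      intro j _
      have := hvw j
      have : ((v j : ℝ)) ≤ (w j : ℝ) := by exact_mod_cast hvw j
      linarith))
end

section
/- For a homogeneous Poisson process of intensity λ > 0 in the plane with k message parts allocated uniformly (so each part forms a thinned Poisson process of intensity λ/k), the limiting expected costs as δ_max → ∞ are W̄^p = k·(k/(λπ))^{a/2}·Γ(1 + a/2) for the uncoded strategy and W̄^c_min = Γ(k + 1 + a/2) / ((1 + a/2)(λπ)^{a/2} Γ(k)) for the coded strategy, for any a > 0. -/
open Real MeasureTheory Set Finset

lemma int1 (c s : ℝ) (hc : 0 < c) (hs : -1 < s) :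
    ∫ x in Set.Ioi (0:ℝ), x ^ s * Real.exp (-(c * x ^ 2))
      = c ^ (-(s+1)/2) * (1/2) * Real.Gamma ((s+1)/2) := by
  rw [← integral_rpow_mul_exp_neg_mul_rpow two_pos hs hc]
  refine setIntegral_congr_fun measurableSet_Ioi fun x hx => ?_
  rw [show (x:ℝ) ^ (2:ℝ) = x ^ 2 by rw [← Real.rpow_natCast x 2]; norm_num]
  ring_nf

lemma term2 (c : ℝ) (hc : 0 < c) (a : ℝ) (ha : 0 < a) (i : ℕ) (hi : 1 ≤ i) :
    ∫ δ in Set.Ioi (0:ℝ),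
        δ ^ a * (2 * c ^ i * δ ^ (2 * i - 1)
          * Real.exp (-(c * δ ^ 2)) / (Nat.factorial (i - 1) : ℝ))
      = c ^ (-(a/2)) * (Real.Gamma ((i:ℝ) + a/2) / (Nat.factorial (i-1) : ℝ)) := by
  have hm : ((2 * i - 1 : ℕ) : ℝ) = 2 * (i:ℝ) - 1 := by
    rw [Nat.cast_sub (by omega)]; push_cast; ring
  have h1 : ∫ δ in Set.Ioi (0:ℝ),
      δ ^ a * (2 * c ^ i * δ ^ (2 * i - 1)
        * Real.exp (-(c * δ ^ 2)) / (Nat.factorial (i - 1) : ℝ))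
      = (2 * c ^ i / (Nat.factorial (i-1) : ℝ)) *
        ∫ δ in Set.Ioi (0:ℝ), δ ^ (a + (2*(i:ℝ)-1)) * Real.exp (-(c * δ ^ 2)) := by
    rw [← MeasureTheory.integral_const_mul]
    refine setIntegral_congr_fun measurableSet_Ioi fun x hx => ?_
    rw [Real.rpow_add hx, ← hm, Real.rpow_natCast]
    ring
  have hiR : (1:ℝ) ≤ (i:ℝ) := by exact_mod_cast hi
  rw [h1, int1 c _ hc (by linarith)]
  have e1 : Real.Gamma ((a + (2*(i:ℝ)-1) + 1)/2) = Real.Gamma ((i:ℝ) + a/2) := by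
    congr 1; ring
  have e2 : c ^ i * c ^ (-(a + (2*(i:ℝ)-1) + 1)/2) = c ^ (-(a/2)) := by
    rw [← Real.rpow_natCast c i, ← Real.rpow_add hc]
    congr 1; ring
  calc (2 * c ^ i / (Nat.factorial (i-1) : ℝ)) *
        (c ^ (-(a + (2*(i:ℝ)-1) + 1)/2) * (1/2) * Real.Gamma ((a + (2*(i:ℝ)-1) + 1)/2))
      = (c ^ i * c ^ (-(a + (2*(i:ℝ)-1) + 1)/2)) *
        (Real.Gamma ((a + (2*(i:ℝ)-1) + 1)/2) / (Nat.factorial (i-1) : ℝ)) := by ring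
    _ = c ^ (-(a/2)) * (Real.Gamma ((i:ℝ) + a/2) / (Nat.factorial (i-1) : ℝ)) := by
        rw [e1, e2]

lemma sumG (a : ℝ) (ha : 0 < a) :
    ∀ k : ℕ, 1 ≤ k →
      ∑ i ∈ Finset.Icc 1 k, Real.Gamma ((i:ℝ) + a/2) / (Nat.factorial (i-1) : ℝ)
        = Real.Gamma ((k:ℝ) + 1 + a/2) / ((1 + a/2) * (Nat.factorial (k-1) : ℝ)) := by
  intro k hk
  induction k with
  | zero => omega
  | succ n ih =>
    rcases Nat.eq_or_lt_of_le hk with h1 | h1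
    · rw [← h1]
      norm_num
      rw [show (2:ℝ) + a/2 = (1 + a/2) + 1 by ring, Real.Gamma_add_one (by positivity)]
      field_simp
    · have hn : 1 ≤ n := by omega
      rw [Finset.sum_Icc_succ_top (by omega), ih hn]
      have hfac : ((n+1-1).factorial : ℝ) = n * ((n-1).factorial : ℝ) := by
        simp only [Nat.add_sub_cancel]
        rw [← Nat.mul_factorial_pred (by omega)]
        push_cast; ring
      have hG : Real.Gamma ((↑(n+1):ℝ) + 1 + a/2) = ((n:ℝ) + 1 + a/2) * Real.Gamma ((n:ℝ) + 1 + a/2) := by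
        rw [show ((↑(n+1):ℝ)) + 1 + a/2 = ((n:ℝ) + 1 + a/2) + 1 by push_cast; ring,
          Real.Gamma_add_one (by positivity)]
      rw [hfac, hG]
      push_cast
      have hne1 : (1:ℝ) + a/2 ≠ 0 := by positivity
      have hne2 : ((n-1).factorial : ℝ) ≠ 0 := by positivity
      have hne3 : (n:ℝ) ≠ 0 := by positivity
      field_simp
      ring

/-- Limiting expected costs as `δ_max → ∞`:
`W̄^p = k E[D₁^a]`, the nearest neighbor in the thinned process of intensity `λ/k`
(density `δ ↦ 2 (λ/k) π δ e^(-(λ/k)πδ²)`), equals `k (k/(λπ))^(a/2) Γ(1 + a/2)`;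
`W̄^c_min = ∑_{i=1}^k E[D_i^a]`, with `D_i` the `i`-th nearest neighbor of the full process
(density `δ ↦ 2 (λπ)^i δ^(2i-1) e^(-λπδ²)/Γ(i)`), equals
`Γ(k + 1 + a/2)/((1 + a/2)(λπ)^(a/2) Γ(k))`. -/
theorem stmt15 (lam : ℝ) (hlam : 0 < lam) (k : ℕ) (hk : 1 ≤ k) (a : ℝ) (ha : 0 < a) :
    ((k : ℝ) * ∫ δ in Set.Ioi (0:ℝ),
        δ ^ a * (2 * (lam / k * Real.pi) * δ * Real.exp (-(lam / k * Real.pi * δ ^ 2)))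
      = (k : ℝ) * ((k : ℝ) / (lam * Real.pi)) ^ (a / 2) * Real.Gamma (1 + a / 2))
    ∧ (∑ i ∈ Finset.Icc 1 k, ∫ δ in Set.Ioi (0:ℝ),
        δ ^ a * (2 * (lam * Real.pi) ^ i * δ ^ (2 * i - 1)
          * Real.exp (-(lam * Real.pi * δ ^ 2)) / (Nat.factorial (i - 1) : ℝ))
      = Real.Gamma ((k : ℝ) + 1 + a / 2)
          / ((1 + a / 2) * (lam * Real.pi) ^ (a / 2) * (Nat.factorial (k - 1) : ℝ))) := by
  have hkR : (0:ℝ) < k := by exact_mod_cast hk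
  constructor
  · set c : ℝ := lam / k * Real.pi with hc
    have hcpos : 0 < c := by positivity
    have h1 : ∫ δ in Set.Ioi (0:ℝ),
        δ ^ a * (2 * c * δ * Real.exp (-(c * δ ^ 2)))
        = 2 * c * ∫ δ in Set.Ioi (0:ℝ), δ ^ (a+1) * Real.exp (-(c * δ ^ 2)) := by
      rw [← MeasureTheory.integral_const_mul]
      refine setIntegral_congr_fun measurableSet_Ioi fun x hx => ?_
      rw [Real.rpow_add_one (ne_of_gt hx)]
      ring
    rw [h1, int1 c (a+1) hcpos (by linarith)]
    have h2 : 2 * c * (c ^ (-(a+1+1)/2) * (1/2) * Real.Gamma ((a+1+1)/2))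
        = ((k : ℝ) / (lam * Real.pi)) ^ (a / 2) * Real.Gamma (1 + a / 2) := by
      have e1 : Real.Gamma ((a+1+1)/2) = Real.Gamma (1 + a/2) := by congr 1; ring
      have e2 : c * c ^ (-(a+1+1)/2) = c ^ (-(a/2)) := by
        nth_rewrite 1 [← Real.rpow_one c]
        rw [← Real.rpow_add hcpos]; congr 1; ring
      have e3 : c ^ (-(a/2)) = ((k : ℝ) / (lam * Real.pi)) ^ (a / 2) := by
        rw [Real.rpow_neg hcpos.le, ← Real.inv_rpow hcpos.le]
        congr 1
        field_simp [hc]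
        rw [hc, div_mul_eq_mul_div, div_mul_cancel₀ _ hkR.ne']
      calc 2 * c * (c ^ (-(a+1+1)/2) * (1/2) * Real.Gamma ((a+1+1)/2))
          = c * c ^ (-(a+1+1)/2) * Real.Gamma ((a+1+1)/2) := by ring
        _ = ((k : ℝ) / (lam * Real.pi)) ^ (a / 2) * Real.Gamma (1 + a / 2) := by
            rw [e1, e2, e3]
    rw [h2, mul_assoc]
  · set c : ℝ := lam * Real.pi with hc
    have hcpos : 0 < c := by positivity
    rw [Finset.sum_congr rfl (fun i hi => term2 c hcpos a ha i (Finset.mem_Icc.mp hi).1),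
      ← Finset.mul_sum, sumG a ha k hk, Real.rpow_neg hcpos.le]
    have hne1 : (1:ℝ) + a/2 ≠ 0 := by positivity
    have hne2 : ((k-1).factorial : ℝ) ≠ 0 := by positivity
    have hne3 : (0:ℝ) < c ^ (a/2) := Real.rpow_pos_of_pos hcpos _
    field_simp
end

section
/- For fixed real b = 1 + a/2 > 1, the function k ↦ b·k^b·B(k, b) (with B the Beta function) is increasing in k on the positive integers (indeed on positive reals), and its limit as k → ∞ equals b·Γ(b) = (a/2 + 1)·Γ(a/2 + 1). -/
open Real Filter

private lemma log_int (c x y : ℝ) (hx : 0 < x + c) (hxy : x ≤ y) :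
    Real.log (y + c) - Real.log (x + c) = ∫ t in x..y, (t + c)⁻¹ := by
  rw [intervalIntegral.integral_comp_add_right (fun u => u⁻¹) c,
    integral_inv_of_pos hx (by linarith), Real.log_div (by linarith) (ne_of_gt hx)]

private lemma intg (x y c : ℝ) (hx : 0 < x + c) (hxy : x ≤ y) :
    IntervalIntegrable (fun t : ℝ => (t + c)⁻¹) MeasureTheory.volume x y := by
  apply ContinuousOn.intervalIntegrable
  apply ContinuousOn.inv₀ (by fun_prop)
  intro t ht
  rw [Set.uIcc_of_le hxy] at ht
  have h1 := ht.1
  exact ne_of_gt (by linarith)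

private lemma keyL {b x y : ℝ} (c : ℝ) (hb : 1 ≤ b) (hx : 0 < x) (hxy : x ≤ y) (hc : 0 ≤ c) :
    (Real.log (x + (b + c)) - Real.log (x + c)) - (Real.log (y + (b + c)) - Real.log (y + c))
      ≤ b * ((Real.log (x + (c + 1)) - Real.log (x + c))
          - (Real.log (y + (c + 1)) - Real.log (y + c))) := by
  have hb0 : (0:ℝ) < b := lt_of_lt_of_le one_pos hb
  have h1 := log_int c x y (by linarith) hxy
  have h2 := log_int (b + c) x y (by linarith) hxy
  have h3 := log_int (c + 1) x y (by linarith) hxy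
  have i1 := intg x y c (by linarith) hxy
  have i2 := intg x y (b + c) (by linarith) hxy
  have i3 := intg x y (c + 1) (by linarith) hxy
  have key : (∫ t in x..y, ((t + c)⁻¹ - (t + (b + c))⁻¹))
      ≤ ∫ t in x..y, b * ((t + c)⁻¹ - (t + (c + 1))⁻¹) := by
    apply intervalIntegral.integral_mono_on hxy (i1.sub i2) ((i1.sub i3).const_mul b)
    intro t ht
    have htx : x ≤ t := ht.1
    have p1 : (0:ℝ) < t + c := by linarith
    have p2 : (0:ℝ) < t + (b + c) := by linarith
    have p3 : (0:ℝ) < t + (c + 1) := by linarith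
    rw [inv_sub_inv p1.ne' p2.ne', inv_sub_inv p1.ne' p3.ne']
    rw [div_le_iff₀ (by positivity)]
    have e : t + (b + c) - (t + c) = b := by ring
    rw [e]
    have e2 : t + (c + 1) - (t + c) = 1 := by ring
    rw [e2]
    rw [show b * (1 / ((t + c) * (t + (c + 1)))) * ((t + c) * (t + (b + c)))
        = b * ((t + c) * (t + (b + c))) / ((t + c) * (t + (c + 1))) by ring]
    rw [le_div_iff₀ (by positivity)]
    nlinarith [mul_nonneg (mul_nonneg hb0.le p1.le) (sub_nonneg.mpr hb)]
  have e1 : (∫ t in x..y, ((t + c)⁻¹ - (t + (b + c))⁻¹))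
      = (∫ t in x..y, (t + c)⁻¹) - ∫ t in x..y, (t + (b + c))⁻¹ :=
    intervalIntegral.integral_sub i1 i2
  have e2 : (∫ t in x..y, b * ((t + c)⁻¹ - (t + (c + 1))⁻¹))
      = b * ((∫ t in x..y, (t + c)⁻¹) - ∫ t in x..y, (t + (c + 1))⁻¹) := by
    rw [intervalIntegral.integral_const_mul, intervalIntegral.integral_sub i1 i3]
  have gl : (Real.log (x + (b + c)) - Real.log (x + c))
        - (Real.log (y + (b + c)) - Real.log (y + c))
      = (∫ t in x..y, ((t + c)⁻¹ - (t + (b + c))⁻¹)) := by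
    rw [e1]; linarith [h1, h2]
  have gr : b * ((Real.log (x + (c + 1)) - Real.log (x + c))
        - (Real.log (y + (c + 1)) - Real.log (y + c)))
      = (∫ t in x..y, b * ((t + c)⁻¹ - (t + (c + 1))⁻¹)) := by
    rw [e2]; nlinarith [h1, h3]
  rw [gl, gr]; exact key

private lemma tel (z : ℝ) (m : ℕ) :
    ∑ j ∈ Finset.range m, (Real.log (z + ((j : ℝ) + 1)) - Real.log (z + (j : ℝ)))
      = Real.log (z + (m : ℝ)) - Real.log z := by
  induction m with
  | zero => simp
  | succ k ih =>
    rw [Finset.sum_range_succ, ih]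
    push_cast
    ring_nf

private lemma sum_mono {b x y : ℝ} (hb : 1 ≤ b) (hx : 0 < x) (hxy : x ≤ y) (n : ℕ) :
    b * Real.log x + ∑ j ∈ Finset.range (n + 1),
        (Real.log (x + (b + (j : ℝ))) - Real.log (x + (j : ℝ)))
      ≤ b * Real.log y + ∑ j ∈ Finset.range (n + 1),
        (Real.log (y + (b + (j : ℝ))) - Real.log (y + (j : ℝ))) := by
  have hb0 : (0:ℝ) < b := lt_of_lt_of_le one_pos hb
  have hy : 0 < y := lt_of_lt_of_le hx hxy
  have h1 : (∑ j ∈ Finset.range (n + 1),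
        (Real.log (x + (b + (j : ℝ))) - Real.log (x + (j : ℝ))))
      - (∑ j ∈ Finset.range (n + 1),
        (Real.log (y + (b + (j : ℝ))) - Real.log (y + (j : ℝ))))
      ≤ b * ((Real.log (x + ((n : ℝ) + 1)) - Real.log x)
          - (Real.log (y + ((n : ℝ) + 1)) - Real.log y)) := by
    calc _ = ∑ j ∈ Finset.range (n + 1),
          ((Real.log (x + (b + (j : ℝ))) - Real.log (x + (j : ℝ)))
            - (Real.log (y + (b + (j : ℝ))) - Real.log (y + (j : ℝ)))) :=
        (Finset.sum_sub_distrib _ _).symm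
      _ ≤ ∑ j ∈ Finset.range (n + 1),
          (b * ((Real.log (x + ((j : ℝ) + 1)) - Real.log (x + (j : ℝ)))
            - (Real.log (y + ((j : ℝ) + 1)) - Real.log (y + (j : ℝ))))) :=
        Finset.sum_le_sum fun j _ => keyL ((j : ℝ)) hb hx hxy (Nat.cast_nonneg j)
      _ = b * ∑ j ∈ Finset.range (n + 1),
          ((Real.log (x + ((j : ℝ) + 1)) - Real.log (x + (j : ℝ)))
            - (Real.log (y + ((j : ℝ) + 1)) - Real.log (y + (j : ℝ)))) :=
        (Finset.mul_sum _ _ _).symm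
      _ = b * ((Real.log (x + ((n : ℝ) + 1)) - Real.log x)
          - (Real.log (y + ((n : ℝ) + 1)) - Real.log y)) := by
        rw [Finset.sum_sub_distrib, tel x (n + 1), tel y (n + 1)]
        push_cast
        ring
  have hlog : Real.log (x + ((n : ℝ) + 1)) ≤ Real.log (y + ((n : ℝ) + 1)) := by
    apply Real.log_le_log (by positivity)
    linarith
  nlinarith [mul_le_mul_of_nonneg_left hlog hb0.le]

private lemma prod_mono {b x y : ℝ} (hb : 1 ≤ b) (hx : 0 < x) (hxy : x ≤ y) (n : ℕ) :
    x ^ b * ∏ j ∈ Finset.range (n + 1), ((x + (b + (j : ℝ))) / (x + (j : ℝ)))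
      ≤ y ^ b * ∏ j ∈ Finset.range (n + 1), ((y + (b + (j : ℝ))) / (y + (j : ℝ))) := by
  have hb0 : (0:ℝ) < b := lt_of_lt_of_le one_pos hb
  have hy : 0 < y := lt_of_lt_of_le hx hxy
  have hlog : ∀ z : ℝ, 0 < z →
      Real.log (z ^ b * ∏ j ∈ Finset.range (n + 1), ((z + (b + (j : ℝ))) / (z + (j : ℝ))))
        = b * Real.log z + ∑ j ∈ Finset.range (n + 1),
            (Real.log (z + (b + (j : ℝ))) - Real.log (z + (j : ℝ))) := by
    intro z hz
    have hprodpos : ∀ j : ℕ, j ∈ Finset.range (n + 1) →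
        ((z + (b + (j : ℝ))) / (z + (j : ℝ))) ≠ 0 := by
      intro j _
      have p1 : (0:ℝ) < z + (b + (j : ℝ)) := by positivity
      have p2 : (0:ℝ) < z + (j : ℝ) := by positivity
      positivity
    rw [Real.log_mul (by positivity) (Finset.prod_ne_zero_iff.mpr hprodpos),
      Real.log_rpow hz, Real.log_prod hprodpos]
    congr 1
    refine Finset.sum_congr rfl fun j _ => ?_
    exact Real.log_div (by positivity) (by positivity)
  have hppos : ∀ z : ℝ, 0 < z →
      0 < z ^ b * ∏ j ∈ Finset.range (n + 1), ((z + (b + (j : ℝ))) / (z + (j : ℝ))) := by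
    intro z hz
    apply mul_pos (by positivity)
    exact Finset.prod_pos fun j _ => div_pos (by positivity) (by positivity)
  rw [← Real.exp_log (hppos x hx), ← Real.exp_log (hppos y hy)]
  apply Real.exp_le_exp.mpr
  rw [hlog x hx, hlog y hy]
  exact sum_mono hb hx hxy n

private lemma phi_mono {b x y : ℝ} (hb : 1 ≤ b) (hx : 0 < x) (hxy : x ≤ y) :
    x ^ b * Real.Gamma x / Real.Gamma (x + b) ≤ y ^ b * Real.Gamma y / Real.Gamma (y + b) := by
  have hb0 : (0:ℝ) < b := lt_of_lt_of_le one_pos hb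
  have hy : 0 < y := lt_of_lt_of_le hx hxy
  have hseq : ∀ z : ℝ, 0 < z → ∀ n : ℕ, 1 ≤ n →
      z ^ b * Real.GammaSeq z n / Real.GammaSeq (z + b) n
        = (z ^ b * ∏ j ∈ Finset.range (n + 1), ((z + (b + (j : ℝ))) / (z + (j : ℝ))))
            / (n : ℝ) ^ b := by
    intro z hz n hn
    have hn0 : (0:ℝ) < n := by exact_mod_cast hn
    have hPz : (0:ℝ) < ∏ j ∈ Finset.range (n + 1), (z + (j : ℝ)) :=
      Finset.prod_pos fun j _ => by positivity
    have hPb : (0:ℝ) < ∏ j ∈ Finset.range (n + 1), (z + b + (j : ℝ)) :=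
      Finset.prod_pos fun j _ => by positivity
    rw [Real.GammaSeq, Real.GammaSeq, Real.rpow_add hn0, Finset.prod_div_distrib]
    have hfac : (0:ℝ) < (n.factorial : ℝ) := by exact_mod_cast Nat.factorial_pos n
    have he : ∀ j ∈ Finset.range (n + 1), z + (b + (j : ℝ)) = z + b + (j : ℝ) :=
      fun j _ => by ring
    rw [Finset.prod_congr rfl he]
    rw [div_eq_div_iff (by positivity) (by positivity)]
    field_simp
  have tx : Filter.Tendsto (fun n : ℕ => x ^ b * Real.GammaSeq x n / Real.GammaSeq (x + b) n)
      atTop (nhds (x ^ b * Real.Gamma x / Real.Gamma (x + b))) := by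
    apply Filter.Tendsto.div
    · exact (Real.GammaSeq_tendsto_Gamma x).const_mul _
    · exact Real.GammaSeq_tendsto_Gamma (x + b)
    · exact (Real.Gamma_pos_of_pos (by linarith)).ne'
  have ty : Filter.Tendsto (fun n : ℕ => y ^ b * Real.GammaSeq y n / Real.GammaSeq (y + b) n)
      atTop (nhds (y ^ b * Real.Gamma y / Real.Gamma (y + b))) := by
    apply Filter.Tendsto.div
    · exact (Real.GammaSeq_tendsto_Gamma y).const_mul _
    · exact Real.GammaSeq_tendsto_Gamma (y + b)
    · exact (Real.Gamma_pos_of_pos (by linarith)).ne'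
  apply le_of_tendsto_of_tendsto tx ty
  filter_upwards [Filter.eventually_ge_atTop 1] with n hn
  have hn0 : (0:ℝ) < n := by exact_mod_cast hn
  rw [hseq x hx n hn, hseq y hy n hn]
  exact (div_le_div_iff_of_pos_right (by positivity)).mpr (prod_mono hb hx hxy n)

private lemma upperB {b x : ℝ} (hb : 1 ≤ b) (hx : 0 < x) :
    x ^ b * Real.Gamma x ≤ Real.Gamma (x + b) := by
  have hb0 : (0:ℝ) < b := lt_of_lt_of_le one_pos hb
  have hxb : (0:ℝ) < x + b := by linarith
  have h := Real.convexOn_log_Gamma.2 (Set.mem_Ioi.mpr hx) (Set.mem_Ioi.mpr hxb)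
    (div_nonneg (by linarith) hb0.le) (show (0:ℝ) ≤ 1 / b by positivity)
    (show (b - 1) / b + 1 / b = 1 by field_simp; ring)
  simp only [Function.comp_apply, smul_eq_mul] at h
  rw [show (b - 1) / b * x + 1 / b * (x + b) = x + 1 by field_simp; try ring] at h
  rw [Real.Gamma_add_one hx.ne', Real.log_mul hx.ne' (Real.Gamma_pos_of_pos hx).ne'] at h
  have h2 := mul_le_mul_of_nonneg_left h hb0.le
  rw [show b * ((b - 1) / b * Real.log (Real.Gamma x) + 1 / b * Real.log (Real.Gamma (x + b)))
      = (b - 1) * Real.log (Real.Gamma x) + Real.log (Real.Gamma (x + b)) by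
    field_simp
    try ring] at h2
  have key : b * Real.log x + Real.log (Real.Gamma x) ≤ Real.log (Real.Gamma (x + b)) := by
    nlinarith [h2]
  calc x ^ b * Real.Gamma x
      = Real.exp (b * Real.log x + Real.log (Real.Gamma x)) := by
        rw [Real.exp_add, Real.rpow_def_of_pos hx, Real.exp_log (Real.Gamma_pos_of_pos hx),
          mul_comm (Real.log x) b]
    _ ≤ Real.exp (Real.log (Real.Gamma (x + b))) := Real.exp_le_exp.mpr key
    _ = Real.Gamma (x + b) := Real.exp_log (Real.Gamma_pos_of_pos hxb)

private lemma Gamma_shift (x : ℝ) (hx : 0 < x) (N : ℕ) :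
    Real.Gamma (x + N) = (∏ j ∈ Finset.range N, (x + (j : ℝ))) * Real.Gamma x := by
  induction N with
  | zero => simp
  | succ k ih =>
    have hxk : (0:ℝ) < x + (k : ℝ) := by positivity
    rw [Finset.prod_range_succ, show x + ((k : ℕ) + 1 : ℕ) = (x + (k : ℝ)) + 1 by
      push_cast; ring, Real.Gamma_add_one hxk.ne', ih]
    ring

private lemma lowerB {b x : ℝ} (hb : 1 ≤ b) (hx : 0 < x) {N : ℕ} (hbN : b ≤ N) :
    Real.Gamma (x + b) ≤ (x + N) ^ b * Real.Gamma x := by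
  have hb0 : (0:ℝ) < b := lt_of_lt_of_le one_pos hb
  have hN0 : (0:ℝ) < N := lt_of_lt_of_le hb0 hbN
  have hxb : (0:ℝ) < x + b := by linarith
  have hxN : (0:ℝ) < x + N := by linarith
  have h := Real.convexOn_log_Gamma.2 (Set.mem_Ioi.mpr hx)
    (Set.mem_Ioi.mpr (show (0:ℝ) < x + (N:ℝ) by linarith))
    (show (0:ℝ) ≤ 1 - b / (N:ℝ) by
      have : b / (N:ℝ) ≤ 1 := (div_le_one hN0).mpr hbN
      linarith)
    (show (0:ℝ) ≤ b / (N:ℝ) by positivity)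
    (show 1 - b / (N:ℝ) + b / (N:ℝ) = 1 by ring)
  simp only [Function.comp_apply, smul_eq_mul] at h
  rw [show (1 - b / (N:ℝ)) * x + b / (N:ℝ) * (x + (N:ℝ)) = x + b by field_simp; ring] at h
  have hlogN : Real.log (Real.Gamma (x + N))
      ≤ N * Real.log (x + N) + Real.log (Real.Gamma x) := by
    rw [Gamma_shift x hx N, Real.log_mul (Finset.prod_pos fun j _ => by positivity).ne'
      (Real.Gamma_pos_of_pos hx).ne', Real.log_prod (fun j _ => by positivity)]
    have : ∑ j ∈ Finset.range N, Real.log (x + (j : ℝ)) ≤ N * Real.log (x + N) := by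
      calc ∑ j ∈ Finset.range N, Real.log (x + (j : ℝ))
          ≤ ∑ j ∈ Finset.range N, Real.log (x + N) := by
            apply Finset.sum_le_sum
            intro j hj
            apply Real.log_le_log (by positivity)
            have : (j : ℝ) ≤ N := by
              exact_mod_cast (Finset.mem_range.mp hj).le
            linarith
        _ = N * Real.log (x + N) := by
            rw [Finset.sum_const, Finset.card_range, nsmul_eq_mul]
    linarith
  have h2 := mul_le_mul_of_nonneg_left hlogN (show (0:ℝ) ≤ b / N by positivity)
  have key : Real.log (Real.Gamma (x + b))
      ≤ b * Real.log (x + N) + Real.log (Real.Gamma x) := by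
    have e : b / N * (N * Real.log (x + N) + Real.log (Real.Gamma x))
        + (1 - b / N) * Real.log (Real.Gamma x)
        = b * Real.log (x + N) + Real.log (Real.Gamma x) := by
      field_simp
      ring
    nlinarith [h, h2]
  calc Real.Gamma (x + b) = Real.exp (Real.log (Real.Gamma (x + b))) :=
        (Real.exp_log (Real.Gamma_pos_of_pos hxb)).symm
    _ ≤ Real.exp (b * Real.log (x + N) + Real.log (Real.Gamma x)) := Real.exp_le_exp.mpr key
    _ = (x + N) ^ b * Real.Gamma x := by
        rw [Real.exp_add, Real.rpow_def_of_pos hxN, Real.exp_log (Real.Gamma_pos_of_pos hx),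
          mul_comm (Real.log (x + N)) b]

private lemma phi_lim {b : ℝ} (hb : 1 ≤ b) :
    Filter.Tendsto (fun x : ℝ => x ^ b * Real.Gamma x / Real.Gamma (x + b))
      atTop (nhds 1) := by
  have hb0 : (0:ℝ) < b := lt_of_lt_of_le one_pos hb
  set N : ℕ := ⌈b⌉₊ with hN
  have hbN : b ≤ (N : ℝ) := Nat.le_ceil b
  have tg : Filter.Tendsto (fun x : ℝ => (x / (x + (N:ℝ))) ^ b) atTop (nhds 1) := by
    have t0 : Filter.Tendsto (fun x : ℝ => (N:ℝ) / (x + (N:ℝ))) atTop (nhds 0) :=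
      Filter.Tendsto.div_atTop tendsto_const_nhds
        (tendsto_atTop_add_const_right _ _ tendsto_id)
    have t1 : Filter.Tendsto (fun x : ℝ => x / (x + (N:ℝ))) atTop (nhds 1) := by
      have heq : (fun x : ℝ => 1 - (N:ℝ) / (x + (N:ℝ))) =ᶠ[atTop]
          (fun x : ℝ => x / (x + (N:ℝ))) := by
        filter_upwards [Filter.eventually_ge_atTop 1] with x hx
        have hxN : (0:ℝ) < x + (N:ℝ) := by positivity
        field_simp
        ring
      have := (tendsto_const_nhds.sub t0 :
        Filter.Tendsto (fun x : ℝ => 1 - (N:ℝ) / (x + (N:ℝ))) atTop (nhds (1 - 0)))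
      rw [sub_zero] at this
      exact this.congr' heq
    have := t1.rpow_const (p := b) (Or.inr hb0.le)
    rwa [Real.one_rpow] at this
  apply tendsto_of_tendsto_of_tendsto_of_le_of_le' tg tendsto_const_nhds
  · filter_upwards [Filter.eventually_ge_atTop 1] with x hx
    have hx0 : (0:ℝ) < x := by linarith
    have hxN : (0:ℝ) < x + (N:ℝ) := by positivity
    have hG : (0:ℝ) < Real.Gamma x := Real.Gamma_pos_of_pos hx0
    have hGb : (0:ℝ) < Real.Gamma (x + b) := Real.Gamma_pos_of_pos (by linarith)
    have h1 : x ^ b * Real.Gamma x / ((x + (N:ℝ)) ^ b * Real.Gamma x)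
        ≤ x ^ b * Real.Gamma x / Real.Gamma (x + b) :=
      div_le_div_of_nonneg_left (by positivity) hGb (lowerB hb hx0 hbN)
    calc (x / (x + (N:ℝ))) ^ b = x ^ b / (x + (N:ℝ)) ^ b := Real.div_rpow hx0.le hxN.le b
      _ = x ^ b * Real.Gamma x / ((x + (N:ℝ)) ^ b * Real.Gamma x) := by
        rw [mul_div_mul_right _ _ hG.ne']
      _ ≤ x ^ b * Real.Gamma x / Real.Gamma (x + b) := h1
  · filter_upwards [Filter.eventually_ge_atTop 1] with x hx
    have hx0 : (0:ℝ) < x := by linarith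
    have hGb : (0:ℝ) < Real.Gamma (x + b) := Real.Gamma_pos_of_pos (by linarith)
    exact (div_le_one hGb).mpr (upperB hb hx0)

/-- For `b = 1 + a/2 > 1` the map `k ↦ b k^b B(k, b)`, with
`B(k,b) = Γ(k)Γ(b)/Γ(k+b)`, is increasing on the positive reals and tends to
`b Γ(b) = (a/2 + 1) Γ(a/2 + 1)` as `k → ∞`. -/
theorem stmt17 (a : ℝ) (ha : 0 < a) :
    (∀ x y : ℝ, 0 < x → x ≤ y →
        (1 + a / 2) * x ^ (1 + a / 2)
            * (Real.Gamma x * Real.Gamma (1 + a / 2) / Real.Gamma (x + (1 + a / 2)))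
          ≤ (1 + a / 2) * y ^ (1 + a / 2)
            * (Real.Gamma y * Real.Gamma (1 + a / 2) / Real.Gamma (y + (1 + a / 2))))
    ∧ Filter.Tendsto
        (fun x : ℝ => (1 + a / 2) * x ^ (1 + a / 2)
            * (Real.Gamma x * Real.Gamma (1 + a / 2) / Real.Gamma (x + (1 + a / 2))))
        Filter.atTop (nhds ((a / 2 + 1) * Real.Gamma (a / 2 + 1))) := by
  set b : ℝ := 1 + a / 2 with hbdef
  have hb : 1 ≤ b := by rw [hbdef]; linarith
  have hb0 : (0:ℝ) < b := lt_of_lt_of_le one_pos hb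
  have hGb : (0:ℝ) < Real.Gamma b := Real.Gamma_pos_of_pos hb0
  have hfac : ∀ z : ℝ, b * z ^ b * (Real.Gamma z * Real.Gamma b / Real.Gamma (z + b))
      = (b * Real.Gamma b) * (z ^ b * Real.Gamma z / Real.Gamma (z + b)) := by
    intro z; ring
  constructor
  · intro x y hx hxy
    rw [hfac x, hfac y]
    exact mul_le_mul_of_nonneg_left (phi_mono hb hx hxy) (by positivity)
  · have heq : (fun x : ℝ => b * x ^ b * (Real.Gamma x * Real.Gamma b / Real.Gamma (x + b)))
        = fun x : ℝ => (b * Real.Gamma b) * (x ^ b * Real.Gamma x / Real.Gamma (x + b)) :=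
      funext hfac
    rw [heq, show a / 2 + 1 = b by rw [hbdef]; ring]
    have := (phi_lim hb).const_mul (b * Real.Gamma b)
    rwa [mul_one] at this
end

section
/- Let caches form a homogeneous Poisson process of intensity λ > 0 in the plane and let r > 0. Under the uncoded strategy with k parts (each part forming an independent thinned Poisson process of intensity λ/k), the cache miss probability is F^p = 1 - (1 - e^{-λπr²/k})^k, while under the coded strategy it is F^c_min = Γ(k, λπr²)/Γ(k). Moreover F^c_min ≤ F^p for all k ≥ 1. -/
open Real MeasureTheory Set Finset

-- derivative lemma
lemma derivAux (n : ℕ) (x : ℝ) :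
    HasDerivAt (fun y => -(Real.exp (-y) * ∑ i ∈ Finset.range (n+1), y^i / (Nat.factorial i : ℝ)))
      (x ^ n * Real.exp (-x) / (Nat.factorial n : ℝ)) x := by
  have h1 : HasDerivAt (fun y : ℝ => Real.exp (-y)) (-Real.exp (-x)) x := by
    simpa using (hasDerivAt_neg x).exp
  have h2 : HasDerivAt (fun y : ℝ => ∑ i ∈ Finset.range (n+1), y^i / (Nat.factorial i : ℝ))
      (∑ i ∈ Finset.range n, x^i / (Nat.factorial i : ℝ)) x := by
    have h3 : HasDerivAt (fun y : ℝ => ∑ i ∈ Finset.range (n+1), y^i / (Nat.factorial i : ℝ))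
        (∑ i ∈ Finset.range (n+1), (i : ℝ) * x^(i-1) / (Nat.factorial i : ℝ)) x := by
      apply HasDerivAt.fun_sum
      intro i _
      exact (hasDerivAt_pow i x).div_const _
    convert h3 using 1
    rw [Finset.sum_range_succ']
    simp only [Nat.cast_zero, zero_mul, Nat.factorial_zero, Nat.cast_one, zero_div, add_zero]
    apply Finset.sum_congr rfl
    intro i _
    have : (Nat.factorial (i+1) : ℝ) = (i+1) * Nat.factorial i := by
      rw [Nat.factorial_succ]; push_cast; ring
    rw [this]
    have h0 : (Nat.factorial i : ℝ) ≠ 0 := Nat.cast_ne_zero.2 (Nat.factorial_ne_zero i)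
    field_simp
    push_cast [add_tsub_cancel_right]
    ring
  have := (h1.mul h2).neg
  refine this.congr_deriv ?_
  rw [Finset.sum_range_succ]
  have h0 : (Nat.factorial n : ℝ) ≠ 0 := Nat.cast_ne_zero.2 (Nat.factorial_ne_zero n)
  field_simp
  ring


lemma intAux (n : ℕ) (μ : ℝ) (hμ : 0 < μ) :
    ∫ z in Set.Ioi μ, z ^ n * Real.exp (-z) / (Nat.factorial n : ℝ)
      = Real.exp (-μ) * ∑ i ∈ Finset.range (n+1), μ^i / (Nat.factorial i : ℝ) := by
  have hint : IntegrableOn (fun z : ℝ => z ^ n * Real.exp (-z) / (Nat.factorial n : ℝ)) (Set.Ioi μ) := by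
    have h := Real.GammaIntegral_convergent (s := (n+1 : ℝ)) (by positivity)
    have h2 : IntegrableOn (fun x : ℝ => Real.exp (-x) * x ^ ((n:ℝ)+1-1)) (Set.Ioi μ) :=
      h.mono_set (Set.Ioi_subset_Ioi hμ.le)
    refine ((h2.congr_fun ?_ measurableSet_Ioi).div_const _)
    intro x hx
    simp only [show (n:ℝ)+1-1 = (n:ℝ) from by ring, Real.rpow_natCast]
    ring
  have htend : Filter.Tendsto
      (fun y => -(Real.exp (-y) * ∑ i ∈ Finset.range (n+1), y^i / (Nat.factorial i : ℝ)))
      Filter.atTop (nhds 0) := by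
    have : Filter.Tendsto
        (fun y : ℝ => ∑ i ∈ Finset.range (n+1), y^i * Real.exp (-y) / (Nat.factorial i : ℝ))
        Filter.atTop (nhds 0) := by
      have := fun i : ℕ => (Real.tendsto_pow_mul_exp_neg_atTop_nhds_zero i).div_const (Nat.factorial i : ℝ)
      have h := tendsto_finset_sum (Finset.range (n+1)) (fun i _ => this i)
      simpa using h
    have heq : (fun y : ℝ => ∑ i ∈ Finset.range (n+1), y^i * Real.exp (-y) / (Nat.factorial i : ℝ))
        = fun y => Real.exp (-y) * ∑ i ∈ Finset.range (n+1), y^i / (Nat.factorial i : ℝ) := by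
      funext y
      rw [Finset.mul_sum]
      apply Finset.sum_congr rfl
      intro i _; ring
    rw [heq] at this
    simpa using this.neg
  have := integral_Ioi_of_hasDerivAt_of_tendsto
    (f := fun y => -(Real.exp (-y) * ∑ i ∈ Finset.range (n+1), y^i / (Nat.factorial i : ℝ)))
    (f' := fun z => z ^ n * Real.exp (-z) / (Nat.factorial n : ℝ))
    ((derivAux n μ).continuousAt.continuousWithinAt)
    (fun x _ => derivAux n x) hint htend
  rw [this]; ring


lemma triangleAux (a t : ℝ) : ∀ m : ℕ,
    ∑ i ∈ Finset.range (m+1), ∑ j ∈ Finset.range (m+1-i),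
        a^i * t^(i+j) / ((Nat.factorial i : ℝ) * (Nat.factorial j : ℝ))
      = ∑ n ∈ Finset.range (m+1), (a+1)^n * t^n / (Nat.factorial n : ℝ) := by
  intro m
  induction m with
  | zero => simp
  | succ m ih =>
    have hsplit : ∀ i ∈ Finset.range (m+2),
        ∑ j ∈ Finset.range (m+2-i),
            a^i * t^(i+j) / ((Nat.factorial i : ℝ) * (Nat.factorial j : ℝ))
          = (∑ j ∈ Finset.range (m+1-i),
              a^i * t^(i+j) / ((Nat.factorial i : ℝ) * (Nat.factorial j : ℝ)))
            + a^i * t^(m+1) / ((Nat.factorial i : ℝ) * (Nat.factorial (m+1-i) : ℝ)) := by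
      intro i hi
      rw [Finset.mem_range] at hi
      have h1 : m + 2 - i = (m + 1 - i) + 1 := by omega
      have h3 : i + (m + 1 - i) = m + 1 := by omega
      rw [h1, Finset.sum_range_succ, h3]
    rw [Finset.sum_congr rfl hsplit, Finset.sum_add_distrib]
    have h2 : ∑ i ∈ Finset.range (m+2), ∑ j ∈ Finset.range (m+1-i),
        a^i * t^(i+j) / ((Nat.factorial i : ℝ) * (Nat.factorial j : ℝ))
        = ∑ i ∈ Finset.range (m+1), ∑ j ∈ Finset.range (m+1-i),
        a^i * t^(i+j) / ((Nat.factorial i : ℝ) * (Nat.factorial j : ℝ)) := by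
      rw [Finset.sum_range_succ]
      simp
    rw [h2, ih]
    conv_rhs => rw [Finset.sum_range_succ]
    congr 1
    -- new diagonal = binomial term
    have hb : (a+1)^(m+1) = ∑ i ∈ Finset.range (m+2), a^i * (1:ℝ)^(m+1-i) * (Nat.choose (m+1) i : ℝ) := by
      exact_mod_cast add_pow a 1 (m+1)
    rw [hb, Finset.sum_mul, Finset.sum_div]
    apply Finset.sum_congr rfl
    intro i hi
    rw [Finset.mem_range] at hi
    have hle : i ≤ m + 1 := by omega
    have hch : (Nat.choose (m+1) i : ℝ) * ((Nat.factorial i : ℝ) * (Nat.factorial (m+1-i) : ℝ))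
        = (Nat.factorial (m+1) : ℝ) := by
      push_cast [← Nat.choose_mul_factorial_mul_factorial hle]
      ring
    have h1 : (Nat.factorial i : ℝ) ≠ 0 := Nat.cast_ne_zero.2 (Nat.factorial_ne_zero _)
    have h2 : (Nat.factorial (m+1-i) : ℝ) ≠ 0 := Nat.cast_ne_zero.2 (Nat.factorial_ne_zero _)
    have hc : (Nat.choose (m+1) i : ℝ) ≠ 0 :=
      Nat.cast_ne_zero.2 (Nat.choose_pos hle).ne'
    rw [← hch]
    field_simp
    ring


lemma ineqAux (t : ℝ) (ht : 0 ≤ t) : ∀ k : ℕ, 1 ≤ k →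
    (Real.exp t - 1)^k + ∑ i ∈ Finset.range k, ((k:ℝ)*t)^i / (Nat.factorial i : ℝ)
      ≤ Real.exp ((k:ℝ)*t) := by
  intro k hk
  induction k, hk using Nat.le_induction with
  | base => simp
  | succ k hk ih =>
    set E := Real.exp t with hE
    have hE1 : 0 ≤ E - 1 := by
      have := Real.one_le_exp ht
      linarith
    have h1 : (E - 1)^k ≤ Real.exp ((k:ℝ)*t)
        - ∑ i ∈ Finset.range k, ((k:ℝ)*t)^i / (Nat.factorial i : ℝ) := by linarith
    have hpownn : (0:ℝ) ≤ (E-1)^k := pow_nonneg hE1 k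
    have hmul : (E - 1)^(k+1)
        ≤ (Real.exp ((k:ℝ)*t) - ∑ i ∈ Finset.range k, ((k:ℝ)*t)^i / (Nat.factorial i : ℝ))
            * (E - 1) := by
      rw [pow_succ]
      exact mul_le_mul_of_nonneg_right h1 hE1
    -- key claim
    have hA : ∑ i ∈ Finset.range k, ((k:ℝ)*t)^i / (Nat.factorial i : ℝ)
        + ((k:ℝ)*t)^k / (Nat.factorial k : ℝ) ≤ Real.exp ((k:ℝ)*t) := by
      have := Real.sum_le_exp_of_nonneg (x := (k:ℝ)*t) (by positivity) (k+1)
      rwa [Finset.sum_range_succ] at this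
    have hB : ∑ i ∈ Finset.range k, (((k:ℝ)*t)^i / (Nat.factorial i : ℝ))
          * ∑ j ∈ Finset.range (k+1-i), t^j / (Nat.factorial j : ℝ)
        ≤ E * ∑ i ∈ Finset.range k, ((k:ℝ)*t)^i / (Nat.factorial i : ℝ) := by
      rw [Finset.mul_sum]
      apply Finset.sum_le_sum
      intro i _
      rw [mul_comm E]
      exact mul_le_mul_of_nonneg_left (Real.sum_le_exp_of_nonneg ht _) (by positivity)
    have hDS : ∑ i ∈ Finset.range k, (((k:ℝ)*t)^i / (Nat.factorial i : ℝ))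
          * ∑ j ∈ Finset.range (k+1-i), t^j / (Nat.factorial j : ℝ)
          + ((k:ℝ)*t)^k / (Nat.factorial k : ℝ)
        = ∑ i ∈ Finset.range (k+1), (((k:ℝ)+1))^i * t^i / (Nat.factorial i : ℝ) := by
      rw [← triangleAux (k:ℝ) t k, Finset.sum_range_succ]
      congr 1
      · apply Finset.sum_congr rfl
        intro i _
        rw [Finset.mul_sum]
        apply Finset.sum_congr rfl
        intro j _
        rw [mul_pow, pow_add]
        field_simp
      · have : k + 1 - k = 1 := by omega
        rw [this]
        simp [mul_pow]
    have hP' : ∑ i ∈ Finset.range (k+1), (((k:ℕ)+1:ℝ))^i * t^i / (Nat.factorial i : ℝ)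
        = ∑ i ∈ Finset.range (k+1), (((k+1:ℕ):ℝ)*t)^i / (Nat.factorial i : ℝ) := by
      apply Finset.sum_congr rfl
      intro i _
      rw [mul_pow]
      push_cast
      ring
    have key : ∑ i ∈ Finset.range (k+1), (((k+1:ℕ):ℝ)*t)^i / (Nat.factorial i : ℝ)
          + ∑ i ∈ Finset.range k, ((k:ℝ)*t)^i / (Nat.factorial i : ℝ)
        ≤ Real.exp ((k:ℝ)*t) + E * ∑ i ∈ Finset.range k, ((k:ℝ)*t)^i / (Nat.factorial i : ℝ) := by
      rw [← hP']
      linarith [hA, hB, hDS]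
    have hexp : Real.exp (((k+1:ℕ):ℝ)*t) = Real.exp ((k:ℝ)*t) * E := by
      rw [← Real.exp_add]
      push_cast
      ring_nf
    rw [hexp]
    nlinarith [hmul, key]
/-- For a planar HPP of intensity `λ` and range `r`: with `μ = λπr²`, the coded cache miss
probability `P(fewer than k points in the disc) = e^(-μ) ∑_{i<k} μ^i/i!` equals
`Γ(k, μ)/Γ(k)`, and it is at most the uncoded miss probability
`F^p = 1 - (1 - e^(-μ/k))^k`. -/
theorem stmt19 (lam r : ℝ) (hlam : 0 < lam) (hr : 0 < r) (k : ℕ) (hk : 1 ≤ k) :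
    (Real.exp (-(lam * Real.pi * r ^ 2))
        * ∑ i ∈ Finset.range k, (lam * Real.pi * r ^ 2) ^ i / (Nat.factorial i : ℝ)
      = uGamma k (lam * Real.pi * r ^ 2) / (Nat.factorial (k - 1) : ℝ))
    ∧ uGamma k (lam * Real.pi * r ^ 2) / (Nat.factorial (k - 1) : ℝ)
        ≤ 1 - (1 - Real.exp (-(lam * Real.pi * r ^ 2) / k)) ^ k := by
  set μ := lam * Real.pi * r ^ 2 with hμdef
  have hμ : 0 < μ := by
    have hπ := Real.pi_pos
    positivity
  obtain ⟨n, rfl⟩ : ∃ n, k = n + 1 := ⟨k - 1, by omega⟩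
  have hfac : (Nat.factorial (n + 1 - 1) : ℝ) = (Nat.factorial n : ℝ) := by norm_num
  have huG : uGamma (↑(n+1)) μ = ∫ z in Set.Ioi μ, z ^ n * Real.exp (-z) := by
    unfold uGamma
    congr 1
    funext z
    rw [show ((↑(n+1) : ℝ) - 1) = (n : ℝ) by push_cast; ring, Real.rpow_natCast]
  have hfac0 : (Nat.factorial n : ℝ) ≠ 0 := Nat.cast_ne_zero.2 (Nat.factorial_ne_zero n)
  have hpart1 : Real.exp (-μ) * ∑ i ∈ Finset.range (n+1), μ ^ i / (Nat.factorial i : ℝ)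
      = uGamma (↑(n+1)) μ / (Nat.factorial (n + 1 - 1) : ℝ) := by
    rw [hfac, huG, eq_div_iff hfac0, ← intAux n μ hμ, ← integral_mul_const]
    congr 1
    funext z
    field_simp
  constructor
  · exact hpart1
  · rw [← hpart1]
    set t := μ / ((n:ℝ)+1) with htdef
    have hkne : ((n:ℝ)+1) ≠ 0 := by positivity
    have ht : 0 ≤ t := by positivity
    have hkt : ((n+1:ℕ):ℝ) * t = μ := by
      rw [htdef]
      push_cast
      field_simp
    have hineq := ineqAux t ht (n+1) (by omega)
    rw [hkt] at hineq
    have hexp2 : Real.exp (-μ / ((n+1:ℕ):ℝ)) = Real.exp (-t) := by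
      congr 1
      rw [htdef]
      push_cast
      ring
    rw [hexp2]
    have h3 : (1 - Real.exp (-t)) ^ (n+1) = Real.exp (-μ) * (Real.exp t - 1)^(n+1) := by
      have h4 : Real.exp (-μ) = (Real.exp (-t))^(n+1) := by
        rw [← Real.exp_nat_mul]
        congr 1
        push_cast at hkt ⊢
        linarith
      rw [h4, ← mul_pow]
      congr 1
      rw [mul_sub, ← Real.exp_add]
      simp
    rw [h3]
    have hexpos : 0 < Real.exp (-μ) := Real.exp_pos _
    have h5 : Real.exp (-μ) * ((Real.exp t - 1)^(n+1)
          + ∑ i ∈ Finset.range (n+1), μ ^ i / (Nat.factorial i : ℝ))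
        ≤ Real.exp (-μ) * Real.exp μ := by
      exact mul_le_mul_of_nonneg_left hineq hexpos.le
    rw [← Real.exp_add] at h5
    simp only [neg_add_cancel, Real.exp_zero] at h5
    nlinarith [h5]
end
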